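/- Let R and B be finite nonempty families of closed balls in ℝ^d with conv(⋃_{D ∈ R} D) ∩ conv(⋃_{D ∈ B} D) = ∅, and let (r, b) be a closest pair with r ∈ conv(⋃_{D ∈ R} D) and b ∈ conv(⋃_{D ∈ B} D) realizing the distance between the two convex hulls. Then the perpendicular bisector hyperplane h* of the segment rb strictly separates the red balls from the blue balls, its margin min_{D ∈ R ∪ B} dist(D, h*) equals dist(r, b)/2, and every other strictly separating hyperplane has strictly smaller margin; hence the maximum-margin separator of the ball-dataset is unique and equals h*. -/

import Mathlib

open scoped RealInnerProductSpace

/-- The hyperplane `{x : ⟪w, x⟫ = c}`. -/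
def hplane (d : ℕ) (w : EuclideanSpace ℝ (Fin d)) (c : ℝ) :
    Set (EuclideanSpace ℝ (Fin d)) :=
  {x | ⟪w, x⟫ = c}

/-- The distance between two subsets of `ℝ^d`. -/
noncomputable def setDist (d : ℕ) (X Y : Set (EuclideanSpace ℝ (Fin d))) : ℝ :=
  sInf (Set.image2 dist X Y)

/-- The margin of a hyperplane `h` w.r.t. a family of closed balls:
`min_{D ∈ F} dist(D, h)`. -/
noncomputable def ballMargin (d : ℕ) (F : Set (EuclideanSpace ℝ (Fin d) × ℝ))
    (h : Set (EuclideanSpace ℝ (Fin d))) : ℝ :=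
  sInf ((fun D : EuclideanSpace ℝ (Fin d) × ℝ =>
    setDist d (Metric.closedBall D.1 D.2) h) '' F)

/-- `(w, c)` strictly separates the red balls `R` from the blue balls `B`. -/
def BallStrictSep (d : ℕ) (R B : Finset (EuclideanSpace ℝ (Fin d) × ℝ))
    (w : EuclideanSpace ℝ (Fin d)) (c : ℝ) : Prop :=
  (∀ D ∈ R, ∀ x ∈ Metric.closedBall D.1 D.2, ⟪w, x⟫ < c) ∧
  ∀ D ∈ B, ∀ y ∈ Metric.closedBall D.1 D.2, c < ⟪w, y⟫

section helpers

variable {d : ℕ}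

lemma inner_isLinear (v : EuclideanSpace ℝ (Fin d)) :
    IsLinearMap ℝ (fun x : EuclideanSpace ℝ (Fin d) => ⟪v, x⟫) :=
  ⟨fun x y => inner_add_right v x y, fun t x => real_inner_smul_right v x t⟩

lemma proj_spec {v : EuclideanSpace ℝ (Fin d)} (hv : v ≠ 0) (c : ℝ)
    (x : EuclideanSpace ℝ (Fin d)) :
    ∃ y ∈ hplane d v c, dist x y = |c - ⟪v, x⟫| / ‖v‖ := by
  have hvn : (0:ℝ) < ‖v‖ := norm_pos_iff.2 hv
  have hv2 : (‖v‖ ^ 2 : ℝ) ≠ 0 := by positivity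
  refine ⟨x + ((c - ⟪v, x⟫) / ‖v‖ ^ 2) • v, ?_, ?_⟩
  · show ⟪v, x + ((c - ⟪v, x⟫) / ‖v‖ ^ 2) • v⟫ = c
    rw [inner_add_right, real_inner_smul_right, real_inner_self_eq_norm_sq,
      div_mul_cancel₀ _ hv2]
    ring
  · rw [dist_eq_norm]
    have : x - (x + ((c - ⟪v, x⟫) / ‖v‖ ^ 2) • v) = -(((c - ⟪v, x⟫) / ‖v‖ ^ 2) • v) := by
      abel
    rw [this, norm_neg, norm_smul, Real.norm_eq_abs, abs_div, abs_of_nonneg (by positivity : (0:ℝ) ≤ ‖v‖^2)]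
    field_simp
  
lemma abs_inner_sub_le {v : EuclideanSpace ℝ (Fin d)} {c : ℝ}
    {x y : EuclideanSpace ℝ (Fin d)} (hy : y ∈ hplane d v c) :
    |⟪v, x⟫ - c| ≤ ‖v‖ * dist x y := by
  have hy' : ⟪v, y⟫ = c := hy
  calc |⟪v, x⟫ - c| = |⟪v, x - y⟫| := by rw [inner_sub_right, hy']
    _ ≤ ‖v‖ * ‖x - y‖ := abs_real_inner_le_norm v (x - y)
    _ = ‖v‖ * dist x y := by rw [dist_eq_norm]

lemma hplane_nonempty {v : EuclideanSpace ℝ (Fin d)} (hv : v ≠ 0) (c : ℝ) :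
    (hplane d v c).Nonempty := by
  obtain ⟨y, hy, -⟩ := proj_spec hv c 0
  exact ⟨y, hy⟩

lemma setDist_le {X Y : Set (EuclideanSpace ℝ (Fin d))}
    {x y : EuclideanSpace ℝ (Fin d)} (hx : x ∈ X) (hy : y ∈ Y) :
    setDist d X Y ≤ dist x y :=
  csInf_le ⟨0, by rintro z ⟨a, _, b, _, rfl⟩; exact dist_nonneg⟩
    (Set.mem_image2_of_mem hx hy)

lemma le_setDist {X Y : Set (EuclideanSpace ℝ (Fin d))} {m : ℝ}
    (hX : X.Nonempty) (hY : Y.Nonempty)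
    (H : ∀ x ∈ X, ∀ y ∈ Y, m ≤ dist x y) :
    m ≤ setDist d X Y :=
 by
  obtain ⟨x, hx⟩ := hX
  obtain ⟨y, hy⟩ := hY
  refine le_csInf ⟨dist x y, Set.mem_image2_of_mem hx hy⟩ ?_
  rintro z ⟨a, ha, b, hb, rfl⟩
  exact H a ha b hb

lemma ballMargin_le {F : Set (EuclideanSpace ℝ (Fin d) × ℝ)}
    {h : Set (EuclideanSpace ℝ (Fin d))} {D : EuclideanSpace ℝ (Fin d) × ℝ}
    (hfin : F.Finite) (hD : D ∈ F) :
    ballMargin d F h ≤ setDist d (Metric.closedBall D.1 D.2) h :=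
  csInf_le (hfin.image _).bddBelow (Set.mem_image_of_mem _ hD)

lemma le_ballMargin {F : Set (EuclideanSpace ℝ (Fin d) × ℝ)}
    {h : Set (EuclideanSpace ℝ (Fin d))} {m : ℝ} (hF : F.Nonempty)
    (H : ∀ D ∈ F, m ≤ setDist d (Metric.closedBall D.1 D.2) h) :
    m ≤ ballMargin d F h :=
  le_csInf (hF.image _) (by rintro z ⟨D, hD, rfl⟩; exact H D hD)

lemma closest_point_inner {K : Set (EuclideanSpace ℝ (Fin d))} (hK : Convex ℝ K)
    {p q : EuclideanSpace ℝ (Fin d)} (hp : p ∈ K)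
    (hmin : ∀ x ∈ K, dist q p ≤ dist q x) :
    ∀ x ∈ K, ⟪q - p, x - p⟫ ≤ 0 := by
  intro x hx
  set I : ℝ := ⟪q - p, x - p⟫ with hI
  set N : ℝ := ‖x - p‖ ^ 2 with hN
  have hNnn : 0 ≤ N := by positivity
  have key : ∀ t : ℝ, 0 < t → t ≤ 1 → I ≤ t / 2 * N := by
    intro t ht0 ht1
    have hz : p + t • (x - p) ∈ K := by
      have h := hK hp hx (by linarith : (0:ℝ) ≤ 1 - t) ht0.le (by ring)
      have he : (1 - t) • p + t • x = p + t • (x - p) := by module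
      rwa [he] at h
    have h1 : ‖q - p‖ ≤ ‖q - p - t • (x - p)‖ := by
      have := hmin _ hz
      rw [dist_eq_norm, dist_eq_norm] at this
      rwa [sub_sub]
    have h2 : ‖q - p‖ ^ 2 ≤ ‖q - p - t • (x - p)‖ ^ 2 :=
      pow_le_pow_left₀ (norm_nonneg _) h1 2
    have h3 : ‖q - p - t • (x - p)‖ ^ 2
        = ‖q - p‖ ^ 2 - 2 * (t * I) + t ^ 2 * N := by
      rw [norm_sub_sq_real, real_inner_smul_right, norm_smul, mul_pow, ← hI,
        Real.norm_eq_abs, abs_of_pos ht0, ← hN]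
    rw [h3] at h2
    nlinarith
  by_contra hcon
  push_neg at hcon
  rcases le_or_gt N 0 with hN0 | hN0
  · have hN0' : N = 0 := le_antisymm hN0 hNnn
    have := key 1 one_pos le_rfl
    rw [hN0'] at this
    linarith
  · have ht : 0 < min 1 (I / N) := lt_min one_pos (div_pos hcon hN0)
    have := key (min 1 (I / N)) ht (min_le_left _ _)
    have h4 : min 1 (I / N) * N ≤ I := by
      rw [← le_div_iff₀ hN0]
      exact min_le_right _ _
    nlinarith
end helpers

set_option maxHeartbeats 1600000 in
/-- Let `R`, `B` be finite nonempty families of closed balls in `ℝ^d`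
with disjoint convex hulls of their unions, and let `(r, b)` be a closest pair realizing
the distance between the two convex hulls.  Then the perpendicular bisector `h*` of the
segment `rb` strictly separates the red balls from the blue balls, its margin equals
`dist(r, b)/2`, and every other strictly separating hyperplane has strictly smaller
margin; hence the maximum-margin separator of the ball-dataset is unique and equals
`h*`. -/
theorem stmt_18 (d : ℕ) (R B : Finset (EuclideanSpace ℝ (Fin d) × ℝ))
    (hRne : R.Nonempty) (hBne : B.Nonempty)
    (hRrad : ∀ D ∈ R, 0 ≤ D.2) (hBrad : ∀ D ∈ B, 0 ≤ D.2)
    (hdisj : convexHull ℝ (⋃ D ∈ R, Metric.closedBall D.1 D.2) ∩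
      convexHull ℝ (⋃ D ∈ B, Metric.closedBall D.1 D.2) = ∅)
    (r b : EuclideanSpace ℝ (Fin d))
    (hr : r ∈ convexHull ℝ (⋃ D ∈ R, Metric.closedBall D.1 D.2))
    (hb : b ∈ convexHull ℝ (⋃ D ∈ B, Metric.closedBall D.1 D.2))
    (hclosest : dist r b = setDist d
      (convexHull ℝ (⋃ D ∈ R, Metric.closedBall D.1 D.2))
      (convexHull ℝ (⋃ D ∈ B, Metric.closedBall D.1 D.2))) :
    -- `h*` strictly separates the red balls from the blue balls …
    (b - r ≠ 0 ∧ BallStrictSep d R B (b - r) ⟪b - r, (1 / 2 : ℝ) • (r + b)⟫) ∧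
    -- … its margin equals `dist r b / 2` …
    ballMargin d (↑R ∪ ↑B) (hplane d (b - r) ⟪b - r, (1 / 2 : ℝ) • (r + b)⟫) =
      dist r b / 2 ∧
    -- … and every other strictly separating hyperplane has strictly smaller margin.
    ∀ h : Set (EuclideanSpace ℝ (Fin d)),
      (∃ (w : EuclideanSpace ℝ (Fin d)) (c : ℝ), w ≠ 0 ∧ h = hplane d w c ∧
        BallStrictSep d R B w c) →
      h ≠ hplane d (b - r) ⟪b - r, (1 / 2 : ℝ) • (r + b)⟫ →
      ballMargin d (↑R ∪ ↑B) h < dist r b / 2 := by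
  classical
  set UR : Set (EuclideanSpace ℝ (Fin d)) := ⋃ D ∈ R, Metric.closedBall D.1 D.2 with hUR
  set UB : Set (EuclideanSpace ℝ (Fin d)) := ⋃ D ∈ B, Metric.closedBall D.1 D.2 with hUB
  set KR := convexHull ℝ UR with hKR
  set KB := convexHull ℝ UB with hKB
  have hURsub : UR ⊆ KR := subset_convexHull ℝ UR
  have hUBsub : UB ⊆ KB := subset_convexHull ℝ UB
  -- `r ≠ b`
  have hrb_ne : r ≠ b := by
    intro hre
    have : r ∈ KR ∩ KB := ⟨hr, hre ▸ hb⟩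
    rw [hdisj] at this
    exact this
  set w := b - r with hw
  have hw0 : w ≠ 0 := sub_ne_zero.2 (Ne.symm hrb_ne)
  have hwpos : (0:ℝ) < ‖w‖ := norm_pos_iff.2 hw0
  have hwsqpos : (0:ℝ) < ‖w‖ ^ 2 := by positivity
  have hdrb : dist r b = ‖w‖ := by rw [dist_eq_norm, norm_sub_rev]
  -- closest point inequalities
  have innR : ∀ x ∈ KR, ⟪w, x⟫ ≤ ⟪w, r⟫ := by
    intro x hx
    have hmin : ∀ z ∈ KR, dist b r ≤ dist b z := by
      intro z hz
      rw [dist_comm b r, dist_comm b z, hclosest]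
      exact setDist_le hz hb
    have h := closest_point_inner (convex_convexHull ℝ UR) hr hmin x hx
    rw [inner_sub_right] at h
    linarith
  have innB : ∀ y ∈ KB, ⟪w, b⟫ ≤ ⟪w, y⟫ := by
    intro y hy
    have hmin : ∀ z ∈ KB, dist r b ≤ dist r z := by
      intro z hz
      rw [hclosest]
      exact setDist_le hr hz
    have h := closest_point_inner (convex_convexHull ℝ UB) hb hmin y hy
    rw [show r - b = -w by rw [hw]; abel, inner_neg_left, inner_sub_right] at h
    linarith
  set c' := ⟪w, (1 / 2 : ℝ) • (r + b)⟫ with hc'def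
  have hc' : c' = (⟪w, r⟫ + ⟪w, b⟫) / 2 := by
    rw [hc'def, real_inner_smul_right, inner_add_right]; ring
  have hwsq : ⟪w, b⟫ - ⟪w, r⟫ = ‖w‖ ^ 2 := by
    rw [← inner_sub_right, ← hw, real_inner_self_eq_norm_sq]
  -- membership in unions
  have hmemR : ∀ D ∈ R, ∀ x ∈ Metric.closedBall D.1 D.2, x ∈ UR := by
    intro D hD x hx
    exact Set.mem_iUnion₂.2 ⟨D, hD, hx⟩
  have hmemB : ∀ D ∈ B, ∀ x ∈ Metric.closedBall D.1 D.2, x ∈ UB := by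
    intro D hD x hx
    exact Set.mem_iUnion₂.2 ⟨D, hD, hx⟩
  -- strict separation for h*
  have hsep : BallStrictSep d R B w c' := by
    constructor
    · intro D hD x hx
      have h1 : ⟪w, x⟫ ≤ ⟪w, r⟫ := innR x (hURsub (hmemR D hD x hx))
      linarith
    · intro D hD y hy
      have h1 : ⟪w, b⟫ ≤ ⟪w, y⟫ := innB y (hUBsub (hmemB D hD y hy))
      linarith
  have hfin : (↑R ∪ ↑B : Set (EuclideanSpace ℝ (Fin d) × ℝ)).Finite :=
    R.finite_toSet.union B.finite_toSet
  have hFne : (↑R ∪ ↑B : Set (EuclideanSpace ℝ (Fin d) × ℝ)).Nonempty := by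
    obtain ⟨D, hD⟩ := hRne
    exact ⟨D, Or.inl hD⟩
  -- margin of h* equals dist r b / 2
  have hmargin : ballMargin d (↑R ∪ ↑B) (hplane d w c') = dist r b / 2 := by
    refine le_antisymm ?_ ?_
    · -- upper bound via a maximizing point
      have hlin : ConvexOn ℝ Set.univ (fun x : EuclideanSpace ℝ (Fin d) => ⟪w, x⟫) :=
        (IsLinearMap.mk' _ (inner_isLinear w)).convexOn convex_univ
      obtain ⟨x₀, hx₀U, hge⟩ := hlin.exists_ge_of_mem_convexHull (Set.subset_univ UR) hr
      have heq : ⟪w, x₀⟫ = ⟪w, r⟫ := le_antisymm (innR x₀ (hURsub hx₀U)) hge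
      obtain ⟨D, hD, hx₀⟩ := Set.mem_iUnion₂.1 hx₀U
      obtain ⟨y₀, hy₀, hdxy⟩ := proj_spec hw0 c' x₀
      have hcx : c' - ⟪w, x₀⟫ = ‖w‖ ^ 2 / 2 := by rw [heq]; linarith
      have hdistval : dist x₀ y₀ = ‖w‖ / 2 := by
        rw [hdxy, hcx, abs_of_pos (by positivity), sq]
        field_simp
      calc ballMargin d (↑R ∪ ↑B) (hplane d w c')
          ≤ setDist d (Metric.closedBall D.1 D.2) (hplane d w c') :=
            ballMargin_le hfin (Or.inl hD)
        _ ≤ dist x₀ y₀ := setDist_le hx₀ hy₀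
        _ = dist r b / 2 := by rw [hdistval, hdrb]
    · -- lower bound
      refine le_ballMargin hFne ?_
      rintro D (hD | hD)
      · refine le_setDist (Metric.nonempty_closedBall.2 (hRrad D hD))
          (hplane_nonempty hw0 c') ?_
        intro x hx y hy
        have h1 : ⟪w, x⟫ ≤ ⟪w, r⟫ := innR x (hURsub (hmemR D hD x hx))
        have habs := abs_inner_sub_le (x := x) hy
        have h2 : ‖w‖ ^ 2 / 2 ≤ |⟪w, x⟫ - c'| := by
          rw [abs_sub_comm]
          refine le_trans ?_ (le_abs_self _)
          linarith
        rw [hdrb]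
        have h3 : ‖w‖ * (‖w‖ / 2) ≤ ‖w‖ * dist x y := by nlinarith
        exact le_of_mul_le_mul_left h3 hwpos
      · refine le_setDist (Metric.nonempty_closedBall.2 (hBrad D hD))
          (hplane_nonempty hw0 c') ?_
        intro x hx y hy
        have h1 : ⟪w, b⟫ ≤ ⟪w, x⟫ := innB x (hUBsub (hmemB D hD x hx))
        have habs := abs_inner_sub_le (x := x) hy
        have h2 : ‖w‖ ^ 2 / 2 ≤ |⟪w, x⟫ - c'| := by
          refine le_trans ?_ (le_abs_self _)
          linarith
        rw [hdrb]
        have h3 : ‖w‖ * (‖w‖ / 2) ≤ ‖w‖ * dist x y := by nlinarith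
        exact le_of_mul_le_mul_left h3 hwpos
  refine ⟨⟨hw0, hsep⟩, hmargin, ?_⟩
  -- uniqueness
  rintro h ⟨v, c, hv0, rfl, hsepR, hsepB⟩ hneq
  have hvpos : (0:ℝ) < ‖v‖ := norm_pos_iff.2 hv0
  set m := ballMargin d (↑R ∪ ↑B) (hplane d v c) with hm
  have hAball : ∀ D ∈ R, ∀ x ∈ Metric.closedBall D.1 D.2, ⟪v, x⟫ ≤ c - m * ‖v‖ := by
    intro D hD x hx
    obtain ⟨y, hy, hdxy⟩ := proj_spec hv0 c x
    have h1 : m ≤ dist x y :=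
      le_trans (ballMargin_le hfin (Or.inl hD)) (setDist_le hx hy)
    have h2 : ⟪v, x⟫ < c := hsepR D hD x hx
    rw [hdxy, abs_of_pos (by linarith), le_div_iff₀ hvpos] at h1
    linarith
  have hBball : ∀ D ∈ B, ∀ x ∈ Metric.closedBall D.1 D.2, c + m * ‖v‖ ≤ ⟪v, x⟫ := by
    intro D hD x hx
    obtain ⟨y, hy, hdxy⟩ := proj_spec hv0 c x
    have h1 : m ≤ dist x y :=
      le_trans (ballMargin_le hfin (Or.inr hD)) (setDist_le hx hy)
    have h2 : c < ⟪v, x⟫ := hsepB D hD x hx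
    rw [hdxy, abs_of_neg (by linarith), le_div_iff₀ hvpos] at h1
    linarith
  have hAr : ⟪v, r⟫ ≤ c - m * ‖v‖ := by
    have hsub : KR ⊆ {x | ⟪v, x⟫ ≤ c - m * ‖v‖} := by
      rw [hKR]
      refine convexHull_min ?_ (convex_halfSpace_le (inner_isLinear v) _)
      intro x hxU
      obtain ⟨D, hD, hx⟩ := Set.mem_iUnion₂.1 hxU
      exact hAball D hD x hx
    exact hsub hr
  have hBb : c + m * ‖v‖ ≤ ⟪v, b⟫ := by
    have hsub : KB ⊆ {x | c + m * ‖v‖ ≤ ⟪v, x⟫} := by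
      rw [hKB]
      refine convexHull_min ?_ (convex_halfSpace_ge (inner_isLinear v) _)
      intro x hxU
      obtain ⟨D, hD, hx⟩ := Set.mem_iUnion₂.1 hxU
      exact hBball D hD x hx
    exact hsub hb
  have hvw : ⟪v, w⟫ = ⟪v, b⟫ - ⟪v, r⟫ := by rw [hw, inner_sub_right]
  have hCS : ⟪v, w⟫ ≤ ‖v‖ * ‖w‖ := real_inner_le_norm v w
  rw [hdrb]
  by_contra hcon
  push_neg at hcon
  -- then m = ‖w‖ / 2 and all inequalities are tight
  have hmul : ‖w‖ / 2 * ‖v‖ ≤ m * ‖v‖ := mul_le_mul_of_nonneg_right hcon hvpos.le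
  have hY : ‖v‖ * ‖w‖ = 2 * (‖w‖ / 2 * ‖v‖) := by ring
  have hinn_eq : ⟪v, w⟫ = ‖v‖ * ‖w‖ := by linarith
  have hre : ⟪v, r⟫ = c - m * ‖v‖ := by linarith
  have hbe : ⟪v, b⟫ = c + m * ‖v‖ := by linarith
  have hsmul : ‖w‖ • v = ‖v‖ • w := inner_eq_norm_mul_iff_real.1 hinn_eq
  have hkey : ∀ x : EuclideanSpace ℝ (Fin d), ‖w‖ * ⟪v, x⟫ = ‖v‖ * ⟪w, x⟫ := by
    intro x
    rw [← real_inner_smul_left, ← real_inner_smul_left, hsmul]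
  have hc'c : ‖v‖ * c' = ‖w‖ * c := by
    have h1 := hkey r
    have h2 := hkey b
    have hsum : ⟪v, r⟫ + ⟪v, b⟫ = 2 * c := by linarith
    calc ‖v‖ * c' = (‖v‖ * ⟪w, r⟫ + ‖v‖ * ⟪w, b⟫) / 2 := by rw [hc']; ring
      _ = (‖w‖ * ⟪v, r⟫ + ‖w‖ * ⟪v, b⟫) / 2 := by rw [h1, h2]
      _ = ‖w‖ * ((⟪v, r⟫ + ⟪v, b⟫) / 2) := by ring
      _ = ‖w‖ * c := by rw [hsum]; ring
  apply hneq
  ext x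
  simp only [hplane, Set.mem_setOf_eq, ← hc'def]
  constructor
  · intro hx
    have : ‖v‖ * ⟪w, x⟫ = ‖v‖ * c' := by rw [← hkey x, hx, hc'c]
    exact mul_left_cancel₀ (ne_of_gt hvpos) this
  · intro hx
    have : ‖w‖ * ⟪v, x⟫ = ‖w‖ * c := by rw [hkey x, hx, hc'c]
    exact mul_left_cancel₀ (ne_of_gt hwpos) this
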